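/- Rate of convergence of average profits: for every n ≥ 1, 0 ≤ p̄_{nΛμ} − p̄_{nΛξ} ≤ p_Δ d_μ/n + √(4 (p_max − p̄_{nΛμ}) p_Δ d_μ/n + (p_Δ d_μ/n)²), where d_μ = ln(1/w_μ); in particular p̄_{nΛμ} − p̄_{nΛξ} = O(n^{−1/2}) as n → ∞. -/

import Mathlib

open Finset Filter

/-- A probability distribution on finite binary strings:
nonnegative, `1` on the empty string, and additive under one-symbol extension. -/
def IsDistr (ρ : List Bool → ℝ) : Prop :=
  (∀ x, 0 ≤ ρ x) ∧ ρ [] = 1 ∧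
    ∀ x, ρ x = ρ (x ++ [false]) + ρ (x ++ [true])

/-- Conditional probability `ρ(b | x) = ρ(xb)/ρ(x)` (junk `0` when `ρ x = 0`). -/
noncomputable def condP (ρ : List Bool → ℝ) (x : List Bool) (b : Bool) : ℝ :=
  ρ (x ++ [b]) / ρ x

/-- Instantaneous relative entropy
`h_t(x) = ∑_b μ(b|x) ln (μ(b|x)/ξ(b|x))` (conventions `0·ln 0 = 0` are automatic
since `Real.log 0 = 0` and `r/0 = 0`). -/
noncomputable def instEnt (μ ξ : List Bool → ℝ) (x : List Bool) : ℝ :=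
  ∑ b : Bool, condP μ x b * Real.log (condP μ x b / condP ξ x b)

/-- Total relative entropy `H_n = ∑_{t=1}^n ∑_{x_{<t}} μ(x_{<t}) h_t(x_{<t})`
(histories of length `t-1`, i.e. length `t ∈ {0,…,n-1}`). -/
noncomputable def totalEnt (μ ξ : List Bool → ℝ) (n : ℕ) : ℝ :=
  ∑ t ∈ Finset.range n, ∑ x : Fin t → Bool,
    μ (List.ofFn x) * instEnt μ ξ (List.ofFn x)

/-- `ρ`-expected loss of predicting `y` after history `x`. -/
noncomputable def expLoss (ρ : List Bool → ℝ) (l : Bool → Bool → ℝ)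
    (x : List Bool) (y : Bool) : ℝ :=
  ∑ b : Bool, condP ρ x b * l b y

/-- `Y` is a fixed choice of minimizers for the scheme `Λ_ρ`. -/
def IsPredictor (ρ : List Bool → ℝ) (l : Bool → Bool → ℝ)
    (Y : List Bool → Bool) : Prop :=
  ∀ x y, expLoss ρ l x (Y x) ≤ expLoss ρ l x y

/-- Total `μ`-expected loss `L_{nΛ}` of the scheme with minimizers `Y`. -/
noncomputable def totalLoss (μ : List Bool → ℝ) (l : Bool → Bool → ℝ)
    (Y : List Bool → Bool) (n : ℕ) : ℝ :=
  ∑ t ∈ Finset.range n, ∑ x : Fin t → Bool,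
    μ (List.ofFn x) * expLoss μ l (List.ofFn x) (Y (List.ofFn x))

/-- `ρ`-expected profit of action `y` after history `x` (the history also
encodes the round `t` via its length). -/
noncomputable def expProfit (ρ : List Bool → ℝ) (p : List Bool → Bool → Bool → ℝ)
    (x : List Bool) (y : Bool) : ℝ :=
  ∑ b : Bool, condP ρ x b * p x b y

/-- `Y` is a fixed choice of maximizers of the `ρ`-expected profit (the scheme `Λ_ρ`). -/
def IsGambler (ρ : List Bool → ℝ) (p : List Bool → Bool → Bool → ℝ)
    (Y : List Bool → Bool) : Prop :=
  ∀ x y, expProfit ρ p x y ≤ expProfit ρ p x (Y x)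

/-- Total `μ`-expected profit `P_{nΛ}` over the first `n` rounds. -/
noncomputable def totalProfit (μ : List Bool → ℝ) (p : List Bool → Bool → Bool → ℝ)
    (Y : List Bool → Bool) (n : ℕ) : ℝ :=
  ∑ t ∈ Finset.range n, ∑ x : Fin t → Bool,
    μ (List.ofFn x) * expProfit μ p (List.ofFn x) (Y (List.ofFn x))

/-- Average `μ`-expected profit per round, `p̄_{nΛ} = P_{nΛ}/n`. -/
noncomputable def avgProfit (μ : List Bool → ℝ) (p : List Bool → Bool → Bool → ℝ)
    (Y : List Bool → Bool) (n : ℕ) : ℝ :=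
  totalProfit μ p Y n / n

/-- Pinsker-type lower bound for binary KL with an adaptive variance constant. -/
lemma klLower (q r c : ℝ) (hr0 : 0 < r) (hrq : r ≤ q) (hq1 : q ≤ 1) (hr1 : r < 1)
    (hc : 0 < c) (hdom : ∀ x ∈ Set.Icc r q, x * (1 - x) ≤ c) :
    (q - r) ^ 2 / (2 * c) ≤ q * Real.log (q / r) + (1 - q) * Real.log ((1 - q) / (1 - r)) := by
  set F : ℝ → ℝ := fun x => q * Real.log x + (1 - q) * Real.log (1 - x) + (q - x) ^ 2 / (2 * c)
    with hF
  have hq0 : 0 < q := lt_of_lt_of_le hr0 hrq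
  have hmono : MonotoneOn F (Set.Icc r q) := by
    apply monotoneOn_of_deriv_nonneg (convex_Icc r q)
    · -- continuity
      apply ContinuousOn.add
      apply ContinuousOn.add
      · exact (Real.continuousOn_log.mono (by
          intro x hx
          simp only [Set.mem_compl_iff, Set.mem_singleton_iff]
          intro h; rw [h] at hx; exact absurd hx.1 (by linarith))).const_smul q |>.congr
          (fun x _ => by simp [smul_eq_mul])
      · rcases eq_or_lt_of_le hq1 with hq | hq
        · exact (continuousOn_const (c := (0:ℝ))).congr (fun x _ => by rw [← hq]; ring)
        · apply ContinuousOn.mul continuousOn_const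
          apply Real.continuousOn_log.comp (Continuous.continuousOn (by continuity))
          intro x hx
          simp only [Set.mem_compl_iff, Set.mem_singleton_iff]
          intro h
          have : x ≤ q := hx.2
          linarith [sub_eq_zero.mp h]
      · exact Continuous.continuousOn (by continuity)
    · -- differentiability on interior
      rw [interior_Icc]
      intro x hx
      have hx0 : x ≠ 0 := by have := hx.1; intro h; rw [h] at this; linarith
      have hx1 : (1:ℝ) - x ≠ 0 := by have := hx.2; intro h; nlinarith [hx.2]
      apply DifferentiableAt.differentiableWithinAt
      apply DifferentiableAt.add
      apply DifferentiableAt.add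
      · exact (Real.differentiableAt_log hx0).const_mul q
      · exact ((Real.differentiableAt_log hx1).comp x (by fun_prop)).const_mul (1 - q)
      · fun_prop
    · rw [interior_Icc]
      intro x hx
      have hx0 : 0 < x := lt_trans hr0 hx.1
      have hx1 : 0 < 1 - x := by have := lt_of_lt_of_le hx.2 hq1; linarith
      have hder : HasDerivAt F (q * x⁻¹ + (1 - q) * ((1 - x)⁻¹ * (-1)) +
          (2 * (q - x) ^ 1 * (-1)) / (2 * c)) x := by
        apply HasDerivAt.add
        apply HasDerivAt.add
        · exact (Real.hasDerivAt_log hx0.ne').const_mul q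
        · have hinner : HasDerivAt (fun y : ℝ => 1 - y) (-1) x := by
            simpa using (hasDerivAt_id x).const_sub 1
          exact ((Real.hasDerivAt_log hx1.ne').comp x hinner).const_mul (1 - q)
        · have hinner : HasDerivAt (fun y : ℝ => q - y) (-1) x := by
            simpa using (hasDerivAt_id x).const_sub q
          simpa using (hinner.pow 2).div_const (2 * c)
      rw [hder.deriv]
      have h1 : q * x⁻¹ + (1 - q) * ((1 - x)⁻¹ * (-1)) = (q - x) / (x * (1 - x)) := by
        field_simp; ring
      rw [h1]
      have hxc : x * (1 - x) ≤ c := hdom x ⟨hx.1.le, hx.2.le⟩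
      have hqx : 0 ≤ q - x := by linarith [hx.2]
      have h2 : (q - x) / c ≤ (q - x) / (x * (1 - x)) :=
        div_le_div_of_nonneg_left hqx (by positivity) hxc
      have h3 : (2 * (q - x) ^ 1 * (-1)) / (2 * c) = -((q - x) / c) := by
        field_simp
      rw [h3]
      linarith
  have hFrq : F r ≤ F q := hmono (Set.left_mem_Icc.2 hrq) (Set.right_mem_Icc.2 hrq) hrq
  have hlog1 : Real.log (q / r) = Real.log q - Real.log r := Real.log_div hq0.ne' hr0.ne'
  have hzz : (q - q) ^ 2 / (2 * c) = 0 := by simp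
  rcases eq_or_lt_of_le hq1 with hq | hq
  · -- q = 1
    subst hq
    simp only [hF, Real.log_one, sub_self, zero_mul, mul_zero, add_zero, zero_add,
      one_mul] at hFrq ⊢
    rw [hlog1, Real.log_one]
    simp only [ne_eq, OfNat.ofNat_ne_zero, not_false_eq_true, zero_pow, zero_div] at hFrq ⊢
    linarith
  · have hlog2 : Real.log ((1 - q) / (1 - r)) = Real.log (1 - q) - Real.log (1 - r) :=
      Real.log_div (by linarith) (by linarith)
    rw [hlog1, hlog2]
    simp only [hF] at hFrq
    rw [hzz] at hFrq
    linarith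

lemma klNonneg (q r : ℝ) (hq0 : 0 ≤ q) (hq1 : q ≤ 1) (hr0 : 0 ≤ r) (hr1 : r ≤ 1)
    (hd0 : 0 < q → 0 < r) (hd1 : q < 1 → r < 1) :
    0 ≤ q * Real.log (q / r) + (1 - q) * Real.log ((1 - q) / (1 - r)) := by
  rcases eq_or_lt_of_le hq0 with h0 | h0
  · -- q = 0
    rw [← h0]
    have hr1' : r < 1 := hd1 (by linarith)
    simp only [zero_mul, sub_zero, zero_add, one_mul]
    rw [Real.log_div one_ne_zero (by linarith), Real.log_one]
    have : Real.log (1 - r) ≤ 0 := Real.log_nonpos (by linarith) (by linarith)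
    linarith
  rcases eq_or_lt_of_le hq1 with h1 | h1
  · -- q = 1
    subst h1
    have hr0' : 0 < r := hd0 h0
    simp only [sub_self, zero_mul, add_zero, one_mul]
    have : 0 ≤ Real.log (1 / r) := Real.log_nonneg (by rw [le_div_iff₀ hr0']; linarith)
    simpa using this
  · have hr0' : 0 < r := hd0 h0
    have hr1' : r < 1 := hd1 h1
    have l1 : Real.log (r / q) ≤ r / q - 1 := Real.log_le_sub_one_of_pos (by positivity)
    have l2 : Real.log ((1 - r) / (1 - q)) ≤ (1 - r) / (1 - q) - 1 :=
      Real.log_le_sub_one_of_pos (by apply div_pos <;> linarith)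
    have e1 : Real.log (q / r) = -Real.log (r / q) := by
      rw [← Real.log_inv]; congr 1; field_simp
    have e2 : Real.log ((1 - q) / (1 - r)) = -Real.log ((1 - r) / (1 - q)) := by
      rw [← Real.log_inv]; congr 1
      rw [eq_comm, inv_eq_iff_eq_inv, eq_comm]
      field_simp
    rw [e1, e2]
    have hqeq : q * (r / q - 1) = r - q := by field_simp
    have hqeq2 : (1 - q) * ((1 - r) / (1 - q) - 1) = q - r := by
      have h : (1:ℝ) - q ≠ 0 := by intro h; rw [sub_eq_zero] at h; exact absurd h.symm (ne_of_lt h1)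
      field_simp; ring
    have m1 : q * Real.log (r / q) ≤ r - q := by
      rw [← hqeq]; exact mul_le_mul_of_nonneg_left l1 hq0
    have m2 : (1 - q) * Real.log ((1 - r) / (1 - q)) ≤ q - r := by
      rw [← hqeq2]; exact mul_le_mul_of_nonneg_left l2 (by linarith)
    linarith

lemma fact1 (r x q : ℝ) (hr0 : 0 ≤ r) (hr2 : r ≤ 1/2) (hrx : r ≤ x) (hxq : x ≤ q)
    (hq1 : q ≤ 1) : x * (1 - x) ≤ (1 - r) * (q + r - 2 * q * r) := by
  rcases le_or_gt (1 - x - r) 0 with h | h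
  · nlinarith [mul_nonneg (by linarith : (0:ℝ) ≤ x - r) (by linarith : (0:ℝ) ≤ -(1 - x - r)),
      mul_nonneg (by linarith : (0:ℝ) ≤ q) (by linarith : (0:ℝ) ≤ 1 - 2*r)]
  · nlinarith [mul_nonneg (by linarith : (0:ℝ) ≤ q - x) (by linarith : (0:ℝ) ≤ 1 - x - r),
      mul_nonneg (by linarith : (0:ℝ) ≤ x - r) (by linarith : (0:ℝ) ≤ x - r),
      mul_nonneg (by linarith : (0:ℝ) ≤ 1 - 2*r) (mul_nonneg (by linarith : (0:ℝ) ≤ 1-q) hr0),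
      mul_nonneg (by linarith : (0:ℝ) ≤ x - r) (by linarith : (0:ℝ) ≤ 1 - x - r)]

lemma fact2 (r x q : ℝ) (hr2 : 1/2 ≤ r) (hrx : r ≤ x) (hxq : x ≤ q)
    (hq1 : q ≤ 1) : x * (1 - x) ≤ r * (q + r - 2 * q * r) := by
  nlinarith [mul_nonneg (by linarith : (0:ℝ) ≤ x - r) (by linarith : (0:ℝ) ≤ x + r - 1),
    mul_nonneg (mul_nonneg (by linarith : (0:ℝ) ≤ r) (by linarith : (0:ℝ) ≤ 1 - q))
      (by linarith : (0:ℝ) ≤ 2*r - 1)]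

set_option maxHeartbeats 1000000 in
lemma keyK (q r s t : ℝ) (hq0 : 0 ≤ q) (hq1 : q ≤ 1) (hr0 : 0 ≤ r) (hr1 : r ≤ 1)
    (hdom : 0 < q → 0 < r) (hs0 : 0 ≤ s) (hs1 : s ≤ 1) (ht0 : 0 ≤ t) (ht1 : t ≤ 1)
    (hcon : r * s ≤ (1 - r) * t) :
    q * s - (1 - q) * t ≤ Real.sqrt (2 * (q * Real.log (q / r) +
      (1 - q) * Real.log ((1 - q) / (1 - r))) * (q * s + (1 - q) * t)) := by
  set h : ℝ := q * Real.log (q / r) + (1 - q) * Real.log ((1 - q) / (1 - r)) with hh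
  rcases le_or_gt (q * s - (1 - q) * t) 0 with hδ | hδ
  · exact le_trans hδ (Real.sqrt_nonneg _)
  -- nontrivial case
  have hq0' : 0 < q := by
    rcases eq_or_lt_of_le hq0 with h0 | h0
    · exfalso; rw [← h0] at hδ; nlinarith
    · exact h0
  have hr0' : 0 < r := hdom hq0'
  have hr1' : r < 1 := by
    rcases eq_or_lt_of_le hr1 with h1 | h1
    · exfalso; rw [h1] at hcon
      have hs : s ≤ 0 := by nlinarith
      have : s = 0 := le_antisymm hs hs0
      rw [this] at hδ; nlinarith
    · exact h1
  have hs0' : 0 < s := by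
    rcases eq_or_lt_of_le hs0 with h1 | h1
    · exfalso; rw [← h1] at hδ; nlinarith
    · exact h1
  have h1r : 0 < 1 - r := by linarith
  -- t' := r*s/(1-r) ≤ t
  have ht' : r * s / (1 - r) ≤ t := by rw [div_le_iff₀ h1r]; nlinarith
  have hδ' : q * s - (1 - q) * t ≤ s * (q - r) / (1 - r) := by
    have e : q * s - (1 - q) * (r * s / (1 - r)) = s * (q - r) / (1 - r) := by
      field_simp; ring
    have h2 : (1 - q) * (r * s / (1 - r)) ≤ (1 - q) * t :=
      mul_le_mul_of_nonneg_left ht' (by linarith)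
    rw [← e]; linarith
  have hqr : r < q := by
    by_contra hc
    push_neg at hc
    have : s * (q - r) / (1 - r) ≤ 0 := by
      apply div_nonpos_of_nonpos_of_nonneg _ h1r.le
      nlinarith
    linarith
  set A : ℝ := q + r - 2 * q * r with hA
  have hApos : 0 < A := by nlinarith
  set c : ℝ := if r ≤ 1/2 then (1 - r) * A else r * A with hc
  have hcpos : 0 < c := by
    rw [hc]; split
    · positivity
    · positivity
  have hdomc : ∀ x ∈ Set.Icc r q, x * (1 - x) ≤ c := by
    intro x hx
    rw [hc]; split
    · exact fact1 r x q hr0 (by assumption) hx.1 hx.2 hq1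
    · exact fact2 r x q (by linarith [not_le.mp (by assumption)]) hx.1 hx.2 hq1
  have hkl : (q - r) ^ 2 / (2 * c) ≤ h := klLower q r c hr0' hqr.le hq1 hr1' hcpos hdomc
  have hh0 : 0 ≤ h := le_trans (by positivity) hkl
  have hsc : s * c ≤ (1 - r) * A := by
    rw [hc]; split
    · nlinarith [mul_pos h1r hApos]
    · have h2 : r * s ≤ 1 - r := by nlinarith
      nlinarith [mul_le_mul_of_nonneg_right h2 hApos.le]
  have hS'eq : q * s + (1 - q) * (r * s / (1 - r)) = s * A / (1 - r) := by
    field_simp; ring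
  have hSS : s * A / (1 - r) ≤ q * s + (1 - q) * t := by
    rw [← hS'eq]
    have := mul_le_mul_of_nonneg_left ht' (by linarith : (0:ℝ) ≤ 1 - q)
    linarith
  have hSpos : 0 < s * A / (1 - r) := by positivity
  have hgoal0 : 0 ≤ 2 * h * (q * s + (1 - q) * t) := by
    have : (0:ℝ) ≤ q * s + (1 - q) * t := by nlinarith
    positivity
  rw [Real.le_sqrt hδ.le hgoal0]
  have step1 : (q * s - (1 - q) * t) ^ 2 ≤ (s * (q - r) / (1 - r)) ^ 2 := by
    nlinarith [hδ, hδ']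
  have e2 : (q - r) ^ 2 / (2 * c) * (2 * (s * A / (1 - r))) =
      (q - r) ^ 2 * s * A / (c * (1 - r)) := by
    field_simp
  have step2 : (s * (q - r) / (1 - r)) ^ 2 ≤ (q - r) ^ 2 / (2 * c) * (2 * (s * A / (1 - r))) := by
    rw [e2, div_pow, div_le_div_iff₀ (by positivity) (by positivity)]
    nlinarith [mul_le_mul_of_nonneg_left hsc
      (by positivity : (0:ℝ) ≤ s * (q - r) ^ 2 * (1 - r))]
  have step3 : (q - r) ^ 2 / (2 * c) * (2 * (s * A / (1 - r))) ≤
      h * (2 * (q * s + (1 - q) * t)) := by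
    apply mul_le_mul hkl (by linarith) (by positivity) hh0
  calc (q * s - (1 - q) * t) ^ 2 ≤ (s * (q - r) / (1 - r)) ^ 2 := step1
    _ ≤ (q - r) ^ 2 / (2 * c) * (2 * (s * A / (1 - r))) := step2
    _ ≤ h * (2 * (q * s + (1 - q) * t)) := step3
    _ = 2 * h * (q * s + (1 - q) * t) := by ring

lemma core (y0 y1 z0 z1 a0 a1 b0 b1 : ℝ)
    (hy0 : 0 ≤ y0) (hy1 : 0 ≤ y1) (hys : y0 + y1 = 1)
    (hz0 : 0 ≤ z0) (hz1 : 0 ≤ z1) (hzs : z0 + z1 = 1)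
    (hd0 : 0 < y0 → 0 < z0) (hd1 : 0 < y1 → 0 < z1)
    (ha00 : 0 ≤ a0) (ha01 : a0 ≤ 1) (ha10 : 0 ≤ a1) (ha11 : a1 ≤ 1)
    (hb00 : 0 ≤ b0) (hb01 : b0 ≤ 1) (hb10 : 0 ≤ b1) (hb11 : b1 ≤ 1)
    (hopt : z0 * b0 + z1 * b1 ≤ z0 * a0 + z1 * a1) :
    y0 * (b0 - a0) + y1 * (b1 - a1) ≤
      Real.sqrt (2 * (y0 * Real.log (y0 / z0) + y1 * Real.log (y1 / z1)) *
        (y0 * (a0 + b0) + y1 * (a1 + b1))) := by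
  set h : ℝ := y0 * Real.log (y0 / z0) + y1 * Real.log (y1 / z1) with hh
  clear_value h
  rcases le_or_gt (y0 * (b0 - a0) + y1 * (b1 - a1)) 0 with hδ | hδ
  · exact le_trans hδ (Real.sqrt_nonneg _)
  have hh0 : 0 ≤ h := by
    have := klNonneg y0 z0 hy0 (by linarith) hz0 (by linarith) hd0
      (fun hlt => by
        have : 0 < y1 := by linarith
        have := hd1 this; linarith)
    have e0 : (1 : ℝ) - y0 = y1 := by linarith
    have e1 : (1 : ℝ) - z0 = z1 := by linarith
    rw [e0, e1] at this
    rw [hh]; exact this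
  -- sign analysis
  rcases le_or_gt (b0 - a0) 0 with h0 | h0 <;> rcases le_or_gt (b1 - a1) 0 with h1 | h1
  · -- both nonpositive: contradiction with hδ
    exfalso
    nlinarith [mul_nonpos_of_nonneg_of_nonpos hy0 h0, mul_nonpos_of_nonneg_of_nonpos hy1 h1]
  · -- m0 ≤ 0 < m1 : orientation with q := y1
    have hk := keyK y1 z1 (b1 - a1) (-(b0 - a0)) hy1 (by linarith) hz1 (by linarith)
      hd1 (by linarith) (by linarith) (by linarith) (by linarith)
      (by nlinarith)
    have e0 : (1 : ℝ) - y1 = y0 := by linarith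
    have e1 : (1 : ℝ) - z1 = z0 := by linarith
    rw [e0, e1] at hk
    have elhs : y1 * (b1 - a1) - y0 * -(b0 - a0) = y0 * (b0 - a0) + y1 * (b1 - a1) := by ring
    rw [elhs] at hk
    apply le_trans hk
    apply Real.sqrt_le_sqrt
    have hcomm : y1 * Real.log (y1 / z1) + y0 * Real.log (y0 / z0) = h := by rw [hh]; ring
    rw [hcomm]
    have hS : y1 * (b1 - a1) + y0 * -(b0 - a0) ≤ y0 * (a0 + b0) + y1 * (a1 + b1) := by
      have t0 : -(b0 - a0) ≤ a0 + b0 := by linarith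
      have t1 : b1 - a1 ≤ a1 + b1 := by linarith
      nlinarith [mul_le_mul_of_nonneg_left t0 hy0, mul_le_mul_of_nonneg_left t1 hy1]
    nlinarith [hS, hh0]
  · -- m1 ≤ 0 < m0 : orientation with q := y0
    have hk := keyK y0 z0 (b0 - a0) (-(b1 - a1)) hy0 (by linarith) hz0 (by linarith)
      hd0 (by linarith) (by linarith) (by linarith) (by linarith)
      (by nlinarith)
    have e0 : (1 : ℝ) - y0 = y1 := by linarith
    have e1 : (1 : ℝ) - z0 = z1 := by linarith
    rw [e0, e1] at hk
    have elhs : y0 * (b0 - a0) - y1 * -(b1 - a1) = y0 * (b0 - a0) + y1 * (b1 - a1) := by ring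
    rw [elhs] at hk
    apply le_trans hk
    apply Real.sqrt_le_sqrt
    rw [← hh]
    have hS : y0 * (b0 - a0) + y1 * -(b1 - a1) ≤ y0 * (a0 + b0) + y1 * (a1 + b1) := by
      have t0 : b0 - a0 ≤ a0 + b0 := by linarith
      have t1 : -(b1 - a1) ≤ a1 + b1 := by linarith
      nlinarith [mul_le_mul_of_nonneg_left t0 hy0, mul_le_mul_of_nonneg_left t1 hy1]
    nlinarith [hS, hh0]
  · -- both positive: contradiction with hopt
    exfalso
    have c0 : 0 ≤ z0 * (b0 - a0) := mul_nonneg hz0 (by linarith)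
    have c1 : 0 ≤ z1 * (b1 - a1) := mul_nonneg hz1 (by linarith)
    have hsum : z0 * (b0 - a0) + z1 * (b1 - a1) ≤ 0 := by linarith [hopt]
    have hz00 : z0 * (b0 - a0) = 0 := by linarith
    have hz11 : z1 * (b1 - a1) = 0 := by linarith
    have : z0 = 0 := by
      rcases mul_eq_zero.mp hz00 with hmm | hmm
      · exact hmm
      · exfalso; linarith
    have : z1 = 0 := by
      rcases mul_eq_zero.mp hz11 with hmm | hmm
      · exact hmm
      · exfalso; linarith
    linarith

lemma genCS {ι : Type*} (s : Finset ι) (u e g : ι → ℝ)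
    (he : ∀ i ∈ s, 0 ≤ e i) (hg : ∀ i ∈ s, 0 ≤ g i)
    (hu : ∀ i ∈ s, u i ≤ Real.sqrt (e i) * Real.sqrt (g i)) :
    ∑ i ∈ s, u i ≤ Real.sqrt (∑ i ∈ s, e i) * Real.sqrt (∑ i ∈ s, g i) := by
  have step1 : ∑ i ∈ s, u i ≤ ∑ i ∈ s, Real.sqrt (e i) * Real.sqrt (g i) :=
    Finset.sum_le_sum hu
  apply le_trans step1
  have hnn : 0 ≤ ∑ i ∈ s, Real.sqrt (e i) * Real.sqrt (g i) :=
    Finset.sum_nonneg fun i _ => mul_nonneg (Real.sqrt_nonneg _) (Real.sqrt_nonneg _)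
  have hcs := Finset.sum_mul_sq_le_sq_mul_sq s (fun i => Real.sqrt (e i))
    (fun i => Real.sqrt (g i))
  have he' : ∑ i ∈ s, Real.sqrt (e i) ^ 2 = ∑ i ∈ s, e i :=
    Finset.sum_congr rfl fun i hi => Real.sq_sqrt (he i hi)
  have hg' : ∑ i ∈ s, Real.sqrt (g i) ^ 2 = ∑ i ∈ s, g i :=
    Finset.sum_congr rfl fun i hi => Real.sq_sqrt (hg i hi)
  rw [he', hg'] at hcs
  have h2 : (∑ i ∈ s, Real.sqrt (e i) * Real.sqrt (g i)) ^ 2 ≤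
      (∑ i ∈ s, e i) * (∑ i ∈ s, g i) := hcs
  calc ∑ i ∈ s, Real.sqrt (e i) * Real.sqrt (g i)
      = Real.sqrt ((∑ i ∈ s, Real.sqrt (e i) * Real.sqrt (g i)) ^ 2) :=
        (Real.sqrt_sq hnn).symm
    _ ≤ Real.sqrt ((∑ i ∈ s, e i) * (∑ i ∈ s, g i)) := Real.sqrt_le_sqrt h2
    _ = Real.sqrt (∑ i ∈ s, e i) * Real.sqrt (∑ i ∈ s, g i) :=
        Real.sqrt_mul (Finset.sum_nonneg he) _

def snocEquiv (t : ℕ) : (Fin t → Bool) × Bool ≃ (Fin (t + 1) → Bool) where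
  toFun p := Fin.snoc p.1 p.2
  invFun f := (fun i => f i.castSucc, f (Fin.last t))
  left_inv p := by
    ext i
    · simp [Fin.snoc_castSucc]
    · simp [Fin.snoc_last]
  right_inv f := by
    funext i
    refine Fin.lastCases ?_ ?_ i
    · simp [Fin.snoc_last]
    · intro j; simp [Fin.snoc_castSucc]

lemma ofFn_snoc' (t : ℕ) (x : Fin t → Bool) (b : Bool) :
    List.ofFn (Fin.snoc x b : Fin (t+1) → Bool) = List.ofFn x ++ [b] := by
  rw [List.ofFn_succ']
  simp [Fin.snoc_castSucc, Fin.snoc_last, List.concat_eq_append]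

lemma sum_split (f : List Bool → ℝ) (t : ℕ) :
    ∑ x : Fin (t + 1) → Bool, f (List.ofFn x) =
      ∑ x : Fin t → Bool, (f (List.ofFn x ++ [false]) + f (List.ofFn x ++ [true])) := by
  rw [← Equiv.sum_comp (snocEquiv t) (fun y => f (List.ofFn y))]
  rw [Fintype.sum_prod_type]
  apply Finset.sum_congr rfl
  intro x _
  rw [Fintype.sum_bool]
  simp only [snocEquiv, Equiv.coe_fn_mk, ofFn_snoc']
  ring

section Hist

variable (μ ξ : List Bool → ℝ)
  (hμ0 : ∀ x, 0 ≤ μ x) (hμa : ∀ x, μ x = μ (x ++ [false]) + μ (x ++ [true]))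
  (hξ0 : ∀ x, 0 ≤ ξ x) (hξa : ∀ x, ξ x = ξ (x ++ [false]) + ξ (x ++ [true]))
  (hdc : ∀ z, 0 < μ z → 0 < ξ z)

lemma condP_nonneg (ρ : List Bool → ℝ) (h0 : ∀ x, 0 ≤ ρ x) (x : List Bool) (b : Bool) :
    0 ≤ condP ρ x b := div_nonneg (h0 _) (h0 _)

lemma condP_sum (ρ : List Bool → ℝ) (ha : ∀ x, ρ x = ρ (x ++ [false]) + ρ (x ++ [true]))
    (x : List Bool) (hx : ρ x ≠ 0) : condP ρ x false + condP ρ x true = 1 := by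
  rw [condP, condP, ← add_div, ← ha x, div_self hx]

include hμ0 in
lemma child_pos (x : List Bool) (b : Bool) (h : 0 < condP μ x b) (hx : 0 < μ x) :
    0 < μ (x ++ [b]) := by
  rcases eq_or_lt_of_le (hμ0 (x ++ [b])) with h0 | h0
  · exfalso
    rw [condP] at h
    rw [← h0, zero_div] at h
    exact lt_irrefl 0 h
  · exact h0

include hμ0 hμa hξ0 hξa hdc in
lemma entNonneg (x : List Bool) : 0 ≤ μ x * instEnt μ ξ x := by
  rcases eq_or_lt_of_le (hμ0 x) with hx | hx
  · rw [← hx, zero_mul]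
  apply mul_nonneg hx.le
  have hξx : 0 < ξ x := hdc x hx
  have hys := condP_sum μ hμa x hx.ne'
  have hzs := condP_sum ξ hξa x hξx.ne'
  have hd0 : 0 < condP μ x true → 0 < condP ξ x true := by
    intro h
    exact div_pos (hdc _ (child_pos μ hμ0 x true h hx)) hξx
  have hd1 : 0 < condP μ x false → 0 < condP ξ x false := by
    intro h
    exact div_pos (hdc _ (child_pos μ hμ0 x false h hx)) hξx
  have := klNonneg (condP μ x true) (condP ξ x true)
    (condP_nonneg μ hμ0 x true) (by linarith [condP_nonneg μ hμ0 x false])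
    (condP_nonneg ξ hξ0 x true) (by linarith [condP_nonneg ξ hξ0 x false])
    hd0
    (by
      intro h
      have h1 : 0 < condP μ x false := by linarith
      have := hd1 h1
      linarith)
  rw [instEnt, Fintype.sum_bool]
  have e0 : (1:ℝ) - condP μ x true = condP μ x false := by linarith
  have e1 : (1:ℝ) - condP ξ x true = condP ξ x false := by linarith
  rw [e0, e1] at this
  linarith

include hμ0 hμa hξ0 hξa hdc in
lemma chainRule (l : List Bool) :
    μ (l ++ [false]) * Real.log (μ (l ++ [false]) / ξ (l ++ [false])) +
      μ (l ++ [true]) * Real.log (μ (l ++ [true]) / ξ (l ++ [true])) =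
    μ l * Real.log (μ l / ξ l) + μ l * instEnt μ ξ l := by
  rcases eq_or_lt_of_le (hμ0 l) with hl | hl
  · have h0 : μ (l ++ [false]) = 0 := by
      have := hμa l; have := hμ0 (l ++ [false]); have := hμ0 (l ++ [true]); linarith
    have h1 : μ (l ++ [true]) = 0 := by
      have := hμa l; have := hμ0 (l ++ [false]); have := hμ0 (l ++ [true]); linarith
    rw [h0, h1, ← hl]; ring
  · have hξl : 0 < ξ l := hdc l hl
    have key : ∀ b : Bool, μ (l ++ [b]) * Real.log (μ (l ++ [b]) / ξ (l ++ [b])) =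
        μ (l ++ [b]) * Real.log (μ l / ξ l) +
          μ l * (condP μ l b * Real.log (condP μ l b / condP ξ l b)) := by
      intro b
      rcases eq_or_lt_of_le (hμ0 (l ++ [b])) with hb | hb
      · rw [← hb, zero_mul, zero_mul, condP, ← hb, zero_div, zero_mul, mul_zero]
        ring
      · have hξb : 0 < ξ (l ++ [b]) := hdc _ hb
        have hcμ : 0 < condP μ l b := div_pos hb hl
        have hcξ : 0 < condP ξ l b := div_pos hξb hξl
        have elog : Real.log (μ (l ++ [b]) / ξ (l ++ [b])) =
            Real.log (μ l / ξ l) + Real.log (condP μ l b / condP ξ l b) := by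
          rw [← Real.log_mul (by positivity) (by positivity)]
          congr 1
          rw [condP, condP]
          field_simp
        rw [elog, mul_add]
        congr 1
        rw [condP]
        field_simp
    rw [key false, key true, instEnt, Fintype.sum_bool, mul_add]
    linear_combination (-(Real.log (μ l / ξ l))) * (hμa l)

lemma expProfit_zero (ρ : List Bool → ℝ) (p : List Bool → Bool → Bool → ℝ)
    (x : List Bool) (y : Bool) (h : ρ x = 0) : expProfit ρ p x y = 0 := by
  simp [expProfit, condP, h]

include hμ0 hμa in
lemma expProfit_bounds (p : List Bool → Bool → Bool → ℝ) (pmax pΔ : ℝ)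
    (hp : ∀ x a y, p x a y ∈ Set.Icc (pmax - pΔ) pmax)
    (x : List Bool) (y : Bool) (hx : 0 < μ x) :
    pmax - pΔ ≤ expProfit μ p x y ∧ expProfit μ p x y ≤ pmax := by
  have hs := condP_sum μ hμa x hx.ne'
  have h0 := condP_nonneg μ hμ0 x true
  have h1 := condP_nonneg μ hμ0 x false
  rw [expProfit, Fintype.sum_bool]
  constructor
  · have b0 := mul_le_mul_of_nonneg_left (hp x true y).1 h0
    have b1 := mul_le_mul_of_nonneg_left (hp x false y).1 h1
    have e1 : condP μ x true * (pmax - pΔ) + condP μ x false * (pmax - pΔ) = pmax - pΔ := by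
      linear_combination (pmax - pΔ) * hs
    linarith [b0, b1, e1]
  · have b0 := mul_le_mul_of_nonneg_left (hp x true y).2 h0
    have b1 := mul_le_mul_of_nonneg_left (hp x false y).2 h1
    have e2 : condP μ x true * pmax + condP μ x false * pmax = pmax := by
      linear_combination pmax * hs
    linarith [b0, b1, e2]

include hμ0 hμa hξ0 hξa hdc in
lemma hist (p : List Bool → Bool → Bool → ℝ) (pmax pΔ : ℝ) (hpΔ : 0 < pΔ)
    (hp : ∀ x a y, p x a y ∈ Set.Icc (pmax - pΔ) pmax)
    (Yξ : List Bool → Bool) (hYξ : IsGambler ξ p Yξ) (x : List Bool) (yact : Bool) :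
    μ x * (expProfit μ p x yact - expProfit μ p x (Yξ x)) ≤
      Real.sqrt (μ x * (2 * instEnt μ ξ x)) *
        Real.sqrt (μ x * (pΔ * (2 * pmax - expProfit μ p x yact -
          expProfit μ p x (Yξ x)))) := by
  rcases eq_or_lt_of_le (hμ0 x) with hx | hx
  · rw [← hx, zero_mul]
    exact mul_nonneg (Real.sqrt_nonneg _) (Real.sqrt_nonneg _)
  have hξx : 0 < ξ x := hdc x hx
  have hys := condP_sum μ hμa x hx.ne'
  have hzs := condP_sum ξ hξa x hξx.ne'
  have hy0 := condP_nonneg μ hμ0 x true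
  have hy1 := condP_nonneg μ hμ0 x false
  have hz0 := condP_nonneg ξ hξ0 x true
  have hz1 := condP_nonneg ξ hξ0 x false
  have hd0 : 0 < condP μ x true → 0 < condP ξ x true := fun h =>
    div_pos (hdc _ (child_pos μ hμ0 x true h hx)) hξx
  have hd1 : 0 < condP μ x false → 0 < condP ξ x false := fun h =>
    div_pos (hdc _ (child_pos μ hμ0 x false h hx)) hξx
  -- ξ-optimality in loss form
  have hopt' := hYξ x yact
  rw [expProfit, Fintype.sum_bool, expProfit, Fintype.sum_bool] at hopt'
  have ediv : ∀ u v : ℝ,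
      condP ξ x true * ((pmax - u) / pΔ) + condP ξ x false * ((pmax - v) / pΔ) =
        (condP ξ x true * (pmax - u) + condP ξ x false * (pmax - v)) / pΔ := by
    intro u v; ring
  have hoptc : condP ξ x true * ((pmax - p x true (Yξ x)) / pΔ) +
      condP ξ x false * ((pmax - p x false (Yξ x)) / pΔ) ≤
      condP ξ x true * ((pmax - p x true yact) / pΔ) +
      condP ξ x false * ((pmax - p x false yact) / pΔ) := by
    rw [ediv, ediv]
    apply (div_le_div_iff_of_pos_right hpΔ).mpr
    nlinarith [hopt', hz0, hz1]
  have bnd : ∀ (u : Bool) (y : Bool), 0 ≤ (pmax - p x u y) / pΔ ∧ (pmax - p x u y) / pΔ ≤ 1 := by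
    intro u y
    constructor
    · exact div_nonneg (by linarith [(hp x u y).2]) hpΔ.le
    · rw [div_le_one hpΔ]; linarith [(hp x u y).1]
  have hcore := core (condP μ x true) (condP μ x false) (condP ξ x true) (condP ξ x false)
    ((pmax - p x true yact) / pΔ) ((pmax - p x false yact) / pΔ)
    ((pmax - p x true (Yξ x)) / pΔ) ((pmax - p x false (Yξ x)) / pΔ)
    hy0 hy1 (by linarith) hz0 hz1 (by linarith) hd0 hd1
    (bnd true yact).1 (bnd true yact).2 (bnd false yact).1 (bnd false yact).2
    (bnd true (Yξ x)).1 (bnd true (Yξ x)).2 (bnd false (Yξ x)).1 (bnd false (Yξ x)).2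
    hoptc
  have hinst : instEnt μ ξ x =
      condP μ x true * Real.log (condP μ x true / condP ξ x true) +
      condP μ x false * Real.log (condP μ x false / condP ξ x false) := by
    rw [instEnt, Fintype.sum_bool]
  rw [← hinst] at hcore
  have hinst0 : 0 ≤ instEnt μ ξ x := by
    by_contra hcon
    push_neg at hcon
    have := mul_neg_of_pos_of_neg hx hcon
    linarith [entNonneg μ ξ hμ0 hμa hξ0 hξa hdc x]
  set S : ℝ := condP μ x true * ((pmax - p x true yact) / pΔ + (pmax - p x true (Yξ x)) / pΔ) +
      condP μ x false * ((pmax - p x false yact) / pΔ + (pmax - p x false (Yξ x)) / pΔ)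
    with hSdef
  have hS0 : 0 ≤ S := by
    apply add_nonneg <;> apply mul_nonneg (by assumption)
    · linarith [(bnd true yact).1, (bnd true (Yξ x)).1]
    · linarith [(bnd false yact).1, (bnd false (Yξ x)).1]
  have Eμ : expProfit μ p x yact =
      condP μ x true * p x true yact + condP μ x false * p x false yact := by
    rw [expProfit, Fintype.sum_bool]
  have Eξ : expProfit μ p x (Yξ x) =
      condP μ x true * p x true (Yξ x) + condP μ x false * p x false (Yξ x) := by
    rw [expProfit, Fintype.sum_bool]
  -- argument equality
  have eArg : μ x * (pΔ * (2 * pmax - expProfit μ p x yact - expProfit μ p x (Yξ x))) =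
      μ x * (pΔ ^ 2 * S) := by
    rw [Eμ, Eξ, hSdef]
    field_simp
    linear_combination (-(2 * pmax)) * hys
  have δeq : expProfit μ p x yact - expProfit μ p x (Yξ x) =
      pΔ * (condP μ x true * ((pmax - p x true (Yξ x)) / pΔ - (pmax - p x true yact) / pΔ) +
            condP μ x false * ((pmax - p x false (Yξ x)) / pΔ - (pmax - p x false yact) / pΔ)) := by
    rw [Eμ, Eξ]
    field_simp
    ring
  rw [eArg, δeq]
  have assemble : Real.sqrt (μ x * (2 * instEnt μ ξ x)) * Real.sqrt (μ x * (pΔ ^ 2 * S)) =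
      (μ x * pΔ) * Real.sqrt (2 * instEnt μ ξ x * S) := by
    rw [← Real.sqrt_mul (by positivity : (0:ℝ) ≤ μ x * (2 * instEnt μ ξ x))]
    have e : μ x * (2 * instEnt μ ξ x) * (μ x * (pΔ ^ 2 * S)) =
        (μ x * pΔ) ^ 2 * (2 * instEnt μ ξ x * S) := by ring
    rw [e, Real.sqrt_mul (sq_nonneg _), Real.sqrt_sq (by positivity)]
  rw [assemble, ← mul_assoc]
  exact mul_le_mul_of_nonneg_left hcore (by positivity)

end Hist

/-- Theorem 4(i), rate of convergence of average profits:
with profits in `[p_max − p_Δ, p_max]` and `d_μ = ln (1/w_μ)`, for every `n ≥ 1`,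
`0 ≤ p̄_{nΛμ} − p̄_{nΛξ} ≤ p_Δ d_μ/n + √(4(p_max − p̄_{nΛμ}) p_Δ d_μ/n + (p_Δ d_μ/n)²)`;
in particular `p̄_{nΛμ} − p̄_{nΛξ} = O(n^{−1/2})`. -/
theorem average_profit_convergence {ι : Type*} [Countable ι]
    (μs : ι → List Bool → ℝ) (w : ι → ℝ)
    (hμs : ∀ i, IsDistr (μs i)) (hw : ∀ i, 0 < w i) (hw1 : HasSum w 1)
    (ξ : List Bool → ℝ) (hξ : ∀ x, HasSum (fun i => w i * μs i x) (ξ x))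
    (i₀ : ι)
    (p : List Bool → Bool → Bool → ℝ) (pmax pΔ : ℝ) (hpΔ : 0 < pΔ)
    (hp : ∀ x a y, p x a y ∈ Set.Icc (pmax - pΔ) pmax)
    (Yμ Yξ : List Bool → Bool)
    (hYμ : IsGambler (μs i₀) p Yμ) (hYξ : IsGambler ξ p Yξ) :
    (∀ n : ℕ, 1 ≤ n →
      0 ≤ avgProfit (μs i₀) p Yμ n - avgProfit (μs i₀) p Yξ n ∧
      avgProfit (μs i₀) p Yμ n - avgProfit (μs i₀) p Yξ n ≤
        pΔ * Real.log (1 / w i₀) / n +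
          Real.sqrt (4 * (pmax - avgProfit (μs i₀) p Yμ n) * pΔ * Real.log (1 / w i₀) / n
            + (pΔ * Real.log (1 / w i₀) / n) ^ 2)) ∧
    ∃ C : ℝ, ∀ n : ℕ, 1 ≤ n →
      avgProfit (μs i₀) p Yμ n - avgProfit (μs i₀) p Yξ n ≤ C / Real.sqrt n := by
  obtain ⟨hμ0, hμe, hμa⟩ := hμs i₀
  set μ : List Bool → ℝ := μs i₀ with hμdef
  -- ξ facts
  have hξ0 : ∀ x, 0 ≤ ξ x := fun x =>
    HasSum.nonneg (fun i => mul_nonneg (hw i).le ((hμs i).1 x)) (hξ x)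
  have hξe : ξ [] = 1 := by
    have h1 : HasSum w (ξ []) := by
      have h2 := hξ []
      have h3 : (fun i => w i * μs i []) = w := by
        funext i; rw [(hμs i).2.1, mul_one]
      rwa [h3] at h2
    exact h1.unique hw1
  have hξa : ∀ x, ξ x = ξ (x ++ [false]) + ξ (x ++ [true]) := by
    intro x
    have h1 := (hξ (x ++ [false])).add (hξ (x ++ [true]))
    have h2 : HasSum (fun i => w i * μs i x) (ξ (x ++ [false]) + ξ (x ++ [true])) := by
      have h3 : (fun i => w i * μs i x) =
          fun i => w i * μs i (x ++ [false]) + w i * μs i (x ++ [true]) := by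
        funext i; rw [(hμs i).2.2 x, mul_add]
      rwa [h3]
    exact (hξ x).unique h2
  have hdomW : ∀ x, w i₀ * μ x ≤ ξ x := fun x =>
    le_hasSum (hξ x) i₀ fun j _ => mul_nonneg (hw j).le ((hμs j).1 x)
  have hdc : ∀ z, 0 < μ z → 0 < ξ z := fun z hz =>
    lt_of_lt_of_le (mul_pos (hw i₀) hz) (hdomW z)
  have hwle1 : w i₀ ≤ 1 := le_hasSum hw1 i₀ fun j _ => (hw j).le
  set d : ℝ := Real.log (1 / w i₀) with hddef
  have hd0 : 0 ≤ d := Real.log_nonneg (by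
    rw [le_div_iff₀ (hw i₀)]; linarith)
  set K : ℝ := pΔ * d with hKdef
  have hK0 : 0 ≤ K := mul_nonneg hpΔ.le hd0
  -- level sums of μ are 1
  have hμsum : ∀ t : ℕ, ∑ x : Fin t → Bool, μ (List.ofFn x) = 1 := by
    intro t
    induction t with
    | zero => simp [hμe]
    | succ t ih =>
      rw [sum_split (fun l => μ l) t]
      calc ∑ x : Fin t → Bool, (μ (List.ofFn x ++ [false]) + μ (List.ofFn x ++ [true]))
          = ∑ x : Fin t → Bool, μ (List.ofFn x) :=
            Finset.sum_congr rfl fun x _ => (hμa (List.ofFn x)).symm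
        _ = 1 := ih
  -- entropy telescoping
  set V : ℕ → ℝ := fun t => ∑ x : Fin t → Bool,
    μ (List.ofFn x) * Real.log (μ (List.ofFn x) / ξ (List.ofFn x)) with hVdef
  have hVstep : ∀ t, V (t + 1) - V t =
      ∑ x : Fin t → Bool, μ (List.ofFn x) * instEnt μ ξ (List.ofFn x) := by
    intro t
    have e1 : V (t + 1) = ∑ x : Fin t → Bool,
        (μ (List.ofFn x) * Real.log (μ (List.ofFn x) / ξ (List.ofFn x)) +
          μ (List.ofFn x) * instEnt μ ξ (List.ofFn x)) := by
      simp only [hVdef]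
      rw [sum_split (fun l => μ l * Real.log (μ l / ξ l)) t]
      exact Finset.sum_congr rfl fun x _ =>
        chainRule μ ξ hμ0 hμa hξ0 hξa hdc (List.ofFn x)
    rw [e1, Finset.sum_add_distrib]; simp only [hVdef]
    ring
  have hV0 : V 0 = 0 := by
    simp only [hVdef]
    simp [hμe, hξe]
  have hEntBound : ∀ m : ℕ,
      (∑ t ∈ Finset.range m, ∑ x : Fin t → Bool,
        μ (List.ofFn x) * instEnt μ ξ (List.ofFn x)) ≤ d := by
    intro m
    have h1 : (∑ t ∈ Finset.range m, ∑ x : Fin t → Bool,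
        μ (List.ofFn x) * instEnt μ ξ (List.ofFn x)) = V m - V 0 := by
      rw [← Finset.sum_range_sub V m]
      exact Finset.sum_congr rfl fun t _ => (hVstep t).symm
    rw [h1, hV0, sub_zero]
    have h2 : V m ≤ ∑ x : Fin m → Bool, μ (List.ofFn x) * d := by
      simp only [hVdef]
      apply Finset.sum_le_sum
      intro x _
      rcases eq_or_lt_of_le (hμ0 (List.ofFn x)) with hz | hz
      · rw [← hz, zero_mul, zero_mul]
      · apply mul_le_mul_of_nonneg_left _ hz.le
        have hξz : 0 < ξ (List.ofFn x) := hdc _ hz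
        apply Real.log_le_log (div_pos hz hξz)
        rw [div_le_div_iff₀ hξz (hw i₀)]
        nlinarith [hdomW (List.ofFn x)]
    calc V m ≤ ∑ x : Fin m → Bool, μ (List.ofFn x) * d := h2
      _ = (∑ x : Fin m → Bool, μ (List.ofFn x)) * d := by rw [Finset.sum_mul]
      _ = d := by rw [hμsum m, one_mul]
  have hEnt0 : ∀ m : ℕ, 0 ≤ ∑ t ∈ Finset.range m, ∑ x : Fin t → Bool,
      μ (List.ofFn x) * instEnt μ ξ (List.ofFn x) :=
    fun m => Finset.sum_nonneg fun t _ => Finset.sum_nonneg fun x _ =>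
      entNonneg μ ξ hμ0 hμa hξ0 hξa hdc (List.ofFn x)
  -- pointwise facts catalogues
  have hgpt : ∀ l : List Bool, 0 ≤ μ l * (pΔ * (2 * pmax - expProfit μ p l (Yμ l) -
      expProfit μ p l (Yξ l))) := by
    intro l
    rcases eq_or_lt_of_le (hμ0 l) with hz | hz
    · rw [← hz, zero_mul]
    · apply mul_nonneg hz.le
      apply mul_nonneg hpΔ.le
      have b1 := (expProfit_bounds μ hμ0 hμa p pmax pΔ hp l (Yμ l) hz).2
      have b2 := (expProfit_bounds μ hμ0 hμa p pmax pΔ hp l (Yξ l) hz).2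
      linarith
  have hept : ∀ l : List Bool, 0 ≤ μ l * (2 * instEnt μ ξ l) := by
    intro l
    have := entNonneg μ ξ hμ0 hμa hξ0 hξa hdc l
    nlinarith
  have hδpt : ∀ l : List Bool, 0 ≤ μ l * (expProfit μ p l (Yμ l) - expProfit μ p l (Yξ l)) :=
    fun l => mul_nonneg (hμ0 l) (sub_nonneg.2 (hYμ l (Yξ l)))
  -- profit level bounds
  have hPlevel : ∀ (Y : List Bool → Bool) (t : ℕ),
      pmax - pΔ ≤ (∑ x : Fin t → Bool, μ (List.ofFn x) * expProfit μ p (List.ofFn x) (Y (List.ofFn x)))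
      ∧ (∑ x : Fin t → Bool, μ (List.ofFn x) * expProfit μ p (List.ofFn x) (Y (List.ofFn x))) ≤ pmax := by
    intro Y t
    constructor
    · calc pmax - pΔ = (∑ x : Fin t → Bool, μ (List.ofFn x)) * (pmax - pΔ) := by
            rw [hμsum t, one_mul]
      _ = ∑ x : Fin t → Bool, μ (List.ofFn x) * (pmax - pΔ) := by rw [Finset.sum_mul]
      _ ≤ _ := by
          apply Finset.sum_le_sum
          intro x _
          rcases eq_or_lt_of_le (hμ0 (List.ofFn x)) with hz | hz
          · rw [← hz, zero_mul, zero_mul]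
          · exact mul_le_mul_of_nonneg_left
              (expProfit_bounds μ hμ0 hμa p pmax pΔ hp _ _ hz).1 hz.le
    · calc (∑ x : Fin t → Bool, μ (List.ofFn x) * expProfit μ p (List.ofFn x) (Y (List.ofFn x)))
          ≤ ∑ x : Fin t → Bool, μ (List.ofFn x) * pmax := by
            apply Finset.sum_le_sum
            intro x _
            rcases eq_or_lt_of_le (hμ0 (List.ofFn x)) with hz | hz
            · rw [← hz, zero_mul, zero_mul]
            · exact mul_le_mul_of_nonneg_left
                (expProfit_bounds μ hμ0 hμa p pmax pΔ hp _ _ hz).2 hz.le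
      _ = pmax := by rw [← Finset.sum_mul, hμsum t, one_mul]
  have hPtot : ∀ (Y : List Bool → Bool) (m : ℕ),
      (m:ℝ) * (pmax - pΔ) ≤ totalProfit μ p Y m ∧ totalProfit μ p Y m ≤ (m:ℝ) * pmax := by
    intro Y m
    constructor
    · calc (m:ℝ) * (pmax - pΔ) = ∑ _t ∈ Finset.range m, (pmax - pΔ) := by
            rw [Finset.sum_const, Finset.card_range, nsmul_eq_mul]
      _ ≤ totalProfit μ p Y m := Finset.sum_le_sum fun t _ => (hPlevel Y t).1
    · calc totalProfit μ p Y m ≤ ∑ _t ∈ Finset.range m, pmax :=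
            Finset.sum_le_sum fun t _ => (hPlevel Y t).2
      _ = (m:ℝ) * pmax := by rw [Finset.sum_const, Finset.card_range, nsmul_eq_mul]
  -- master inequality
  have master : ∀ m : ℕ, 1 ≤ m →
      0 ≤ totalProfit μ p Yμ m - totalProfit μ p Yξ m ∧
      totalProfit μ p Yμ m - totalProfit μ p Yξ m ≤
        K + Real.sqrt (4 * K * ((m:ℝ) * pmax - totalProfit μ p Yμ m) + K ^ 2) := by
    intro m hm
    have hSgeq : totalProfit μ p Yμ m - totalProfit μ p Yξ m =
        ∑ t ∈ Finset.range m, ∑ x : Fin t → Bool,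
          μ (List.ofFn x) * (expProfit μ p (List.ofFn x) (Yμ (List.ofFn x)) -
            expProfit μ p (List.ofFn x) (Yξ (List.ofFn x))) := by
      rw [totalProfit, totalProfit, ← Finset.sum_sub_distrib]
      apply Finset.sum_congr rfl
      intro t _
      rw [← Finset.sum_sub_distrib]
      exact Finset.sum_congr rfl fun x _ => (mul_sub _ _ _).symm
    have hSg0 : 0 ≤ totalProfit μ p Yμ m - totalProfit μ p Yξ m := by
      rw [hSgeq]
      exact Finset.sum_nonneg fun t _ => Finset.sum_nonneg fun x _ => hδpt _
    refine ⟨hSg0, ?_⟩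
    -- Cauchy-Schwarz
    have hCS : totalProfit μ p Yμ m - totalProfit μ p Yξ m ≤
        Real.sqrt (∑ t ∈ Finset.range m, ∑ x : Fin t → Bool,
            μ (List.ofFn x) * (2 * instEnt μ ξ (List.ofFn x))) *
        Real.sqrt (∑ t ∈ Finset.range m, ∑ x : Fin t → Bool,
            μ (List.ofFn x) * (pΔ * (2 * pmax - expProfit μ p (List.ofFn x) (Yμ (List.ofFn x)) -
              expProfit μ p (List.ofFn x) (Yξ (List.ofFn x))))) := by
      rw [hSgeq]
      apply genCS
      · intro t _; exact Finset.sum_nonneg fun x _ => hept _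
      · intro t _; exact Finset.sum_nonneg fun x _ => hgpt _
      · intro t _
        apply genCS
        · intro x _; exact hept _
        · intro x _; exact hgpt _
        · intro x _
          exact hist μ ξ hμ0 hμa hξ0 hξa hdc p pmax pΔ hpΔ hp Yξ hYξ (List.ofFn x) _
    -- identify the two sums
    have hEsum : (∑ t ∈ Finset.range m, ∑ x : Fin t → Bool,
        μ (List.ofFn x) * (2 * instEnt μ ξ (List.ofFn x))) =
        2 * ∑ t ∈ Finset.range m, ∑ x : Fin t → Bool,
          μ (List.ofFn x) * instEnt μ ξ (List.ofFn x) := by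
      rw [Finset.mul_sum]
      apply Finset.sum_congr rfl
      intro t _
      rw [Finset.mul_sum]
      exact Finset.sum_congr rfl fun x _ => by ring
    have hGsum : (∑ t ∈ Finset.range m, ∑ x : Fin t → Bool,
        μ (List.ofFn x) * (pΔ * (2 * pmax - expProfit μ p (List.ofFn x) (Yμ (List.ofFn x)) -
          expProfit μ p (List.ofFn x) (Yξ (List.ofFn x))))) =
        pΔ * (2 * pmax * m - totalProfit μ p Yμ m - totalProfit μ p Yξ m) := by
      have hlevel : ∀ t : ℕ, (∑ x : Fin t → Bool,
          μ (List.ofFn x) * (pΔ * (2 * pmax - expProfit μ p (List.ofFn x) (Yμ (List.ofFn x)) -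
            expProfit μ p (List.ofFn x) (Yξ (List.ofFn x))))) =
          pΔ * 2 * pmax -
            pΔ * (∑ x : Fin t → Bool, μ (List.ofFn x) * expProfit μ p (List.ofFn x) (Yμ (List.ofFn x))) -
            pΔ * (∑ x : Fin t → Bool, μ (List.ofFn x) * expProfit μ p (List.ofFn x) (Yξ (List.ofFn x))) := by
        intro t
        have e1 : ∀ x : Fin t → Bool,
            μ (List.ofFn x) * (pΔ * (2 * pmax - expProfit μ p (List.ofFn x) (Yμ (List.ofFn x)) -
              expProfit μ p (List.ofFn x) (Yξ (List.ofFn x)))) =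
            pΔ * 2 * pmax * μ (List.ofFn x) -
              pΔ * (μ (List.ofFn x) * expProfit μ p (List.ofFn x) (Yμ (List.ofFn x))) -
              pΔ * (μ (List.ofFn x) * expProfit μ p (List.ofFn x) (Yξ (List.ofFn x))) := by
          intro x; ring
        rw [Finset.sum_congr rfl fun x _ => e1 x]
        rw [Finset.sum_sub_distrib, Finset.sum_sub_distrib]
        rw [← Finset.mul_sum, ← Finset.mul_sum, ← Finset.mul_sum, hμsum t, mul_one]
      rw [Finset.sum_congr rfl fun t (_ : t ∈ Finset.range m) => hlevel t]
      rw [Finset.sum_sub_distrib, Finset.sum_sub_distrib]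
      rw [Finset.sum_const, Finset.card_range, nsmul_eq_mul]
      rw [← Finset.mul_sum, ← Finset.mul_sum]
      rw [totalProfit, totalProfit]
      ring
    -- squared bound
    set Sg : ℝ := totalProfit μ p Yμ m - totalProfit μ p Yξ m with hSgdef
    set D : ℝ := ∑ t ∈ Finset.range m, ∑ x : Fin t → Bool,
      μ (List.ofFn x) * instEnt μ ξ (List.ofFn x) with hDdef
    have hG0 : 0 ≤ pΔ * (2 * pmax * m - totalProfit μ p Yμ m - totalProfit μ p Yξ m) := by
      rw [← hGsum]
      exact Finset.sum_nonneg fun t _ => Finset.sum_nonneg fun x _ => hgpt _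
    have hD0 : 0 ≤ D := by
      rw [hDdef]
      exact Finset.sum_nonneg fun t _ => Finset.sum_nonneg fun x _ =>
        entNonneg μ ξ hμ0 hμa hξ0 hξa hdc (List.ofFn x)
    have hsq : Sg ^ 2 ≤ (2 * D) * (pΔ * (2 * pmax * m - totalProfit μ p Yμ m -
        totalProfit μ p Yξ m)) := by
      have h1 := hCS
      rw [hEsum, hGsum] at h1
      have h2 : Sg ^ 2 ≤ (Real.sqrt (2 * D) *
          Real.sqrt (pΔ * (2 * pmax * m - totalProfit μ p Yμ m - totalProfit μ p Yξ m))) ^ 2 :=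
        pow_le_pow_left₀ hSg0 h1 2
      rwa [mul_pow, Real.sq_sqrt (by linarith : (0:ℝ) ≤ 2 * D), Real.sq_sqrt hG0] at h2
    have hsq2 : Sg ^ 2 ≤ (2 * d) * (pΔ * (2 * pmax * m - totalProfit μ p Yμ m -
        totalProfit μ p Yξ m)) := by
      apply le_trans hsq
      apply mul_le_mul_of_nonneg_right _ hG0
      have := hEntBound m
      rw [← hDdef] at this
      linarith
    -- solve the quadratic
    have hexp : (2 * d) * (pΔ * (2 * pmax * m - totalProfit μ p Yμ m -
        totalProfit μ p Yξ m)) = 4 * K * ((m:ℝ) * pmax - totalProfit μ p Yμ m) + 2 * K * Sg := by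
      rw [hKdef, hSgdef]; ring
    have hkey : (Sg - K) ^ 2 ≤ 4 * K * ((m:ℝ) * pmax - totalProfit μ p Yμ m) + K ^ 2 := by
      rw [hexp] at hsq2
      nlinarith [hsq2]
    have hfin : Sg - K ≤ Real.sqrt (4 * K * ((m:ℝ) * pmax - totalProfit μ p Yμ m) + K ^ 2) :=
      calc Sg - K ≤ |Sg - K| := le_abs_self _
        _ = Real.sqrt ((Sg - K) ^ 2) := (Real.sqrt_sq_eq_abs _).symm
        _ ≤ Real.sqrt (4 * K * ((m:ℝ) * pmax - totalProfit μ p Yμ m) + K ^ 2) :=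
          Real.sqrt_le_sqrt hkey
    linarith [hfin]
  constructor
  · intro n hn
    obtain ⟨h0, h1⟩ := master n hn
    have hN0 : (0:ℝ) < n := by exact_mod_cast hn
    have hN1 : (1:ℝ) ≤ n := by exact_mod_cast hn
    have hnum0 : 0 ≤ 4 * K * ((n:ℝ) * pmax - totalProfit μ p Yμ n) + K ^ 2 := by
      have hP := (hPtot Yμ n).2
      nlinarith [hK0]
    constructor
    · simp only [avgProfit]
      rw [div_sub_div_same]
      exact div_nonneg h0 hN0.le
    · simp only [avgProfit]
      rw [div_sub_div_same]
      have e2 : 4 * (pmax - totalProfit μ p Yμ n / (n:ℝ)) * pΔ * d / (n:ℝ) + (K / (n:ℝ)) ^ 2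
          = (4 * K * ((n:ℝ) * pmax - totalProfit μ p Yμ n) + K ^ 2) / ((n:ℝ)) ^ 2 := by
        rw [hKdef]; field_simp
      rw [e2, Real.sqrt_div hnum0, Real.sqrt_sq hN0.le, ← add_div]
      exact (div_le_div_iff_of_pos_right hN0).mpr h1
  · refine ⟨K + Real.sqrt (4 * K * pΔ + K ^ 2), ?_⟩
    intro n hn
    obtain ⟨h0, h1⟩ := master n hn
    have hN0 : (0:ℝ) < n := by exact_mod_cast hn
    have hN1 : (1:ℝ) ≤ n := by exact_mod_cast hn
    have hs0 : 0 < Real.sqrt n := Real.sqrt_pos.mpr hN0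
    have hsn : Real.sqrt n ≤ n := by
      have h2 := Real.sqrt_le_sqrt (by nlinarith : (n:ℝ) ≤ (n:ℝ) ^ 2)
      rwa [Real.sqrt_sq hN0.le] at h2
    simp only [avgProfit]
    rw [div_sub_div_same]
    have harg : 4 * K * ((n:ℝ) * pmax - totalProfit μ p Yμ n) + K ^ 2 ≤
        (n:ℝ) * (4 * K * pΔ + K ^ 2) := by
      have hP := (hPtot Yμ n).1
      nlinarith [hK0, hN1, sq_nonneg K]
    have e3 : Real.sqrt ((n:ℝ) * (4 * K * pΔ + K ^ 2)) / (n:ℝ) =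
        Real.sqrt (4 * K * pΔ + K ^ 2) / Real.sqrt n := by
      rw [Real.sqrt_mul hN0.le, div_eq_div_iff hN0.ne' hs0.ne']
      linear_combination Real.sqrt (4 * K * pΔ + K ^ 2) * (Real.mul_self_sqrt hN0.le)
    calc (totalProfit μ p Yμ n - totalProfit μ p Yξ n) / (n:ℝ)
        ≤ (K + Real.sqrt (4 * K * ((n:ℝ) * pmax - totalProfit μ p Yμ n) + K ^ 2)) / (n:ℝ) :=
          (div_le_div_iff_of_pos_right hN0).mpr h1
      _ = K / (n:ℝ) + Real.sqrt (4 * K * ((n:ℝ) * pmax - totalProfit μ p Yμ n) + K ^ 2) / (n:ℝ) :=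
          add_div _ _ _
      _ ≤ K / Real.sqrt n + Real.sqrt ((n:ℝ) * (4 * K * pΔ + K ^ 2)) / (n:ℝ) := by
          apply add_le_add
          · exact div_le_div_of_nonneg_left hK0 hs0 hsn
          · exact (div_le_div_iff_of_pos_right hN0).mpr (Real.sqrt_le_sqrt harg)
      _ = K / Real.sqrt n + Real.sqrt (4 * K * pΔ + K ^ 2) / Real.sqrt n := by rw [e3]
      _ = (K + Real.sqrt (4 * K * pΔ + K ^ 2)) / Real.sqrt n := (add_div _ _ _).symm
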